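/- Let μ/2 < λ < μ. Then the function s ↦ ξ⁺(s) is differentiable at s = λ - μ and its derivative there equals μ/(2λ-μ), i.e. ξ⁺′(λ-μ) = 1/(2ϱ-1) with ϱ = λ/μ. -/

import Mathlib

noncomputable section

/-- The quadratic discriminant `D(s)` of the symmetric SQF model. -/
def Dq (lam mu s : ℝ) : ℝ :=
  (mu ^ 2 - lam * mu / 2 + (mu - lam) * s) ^ 2 + 2 * lam * mu * s * (mu + s)

/-- The branch `ξ⁺(s)` of the quadratic `(s+μ)ξ² + (μ²-λμ/2+(μ-λ)s)ξ - λμs/2 = 0`. -/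
def xiPlus (lam mu s : ℝ) : ℝ :=
  (-(mu ^ 2 - lam * mu / 2 + (mu - lam) * s) + Real.sqrt (Dq lam mu s)) / (2 * (s + mu))

/-- The branch `ξ⁻(s)` of the quadratic `(s+μ)ξ² + (μ²-λμ/2+(μ-λ)s)ξ - λμs/2 = 0`. -/
def xiMinus (lam mu s : ℝ) : ℝ :=
  (-(mu ^ 2 - lam * mu / 2 + (mu - lam) * s) - Real.sqrt (Dq lam mu s)) / (2 * (s + mu))

/-- The key cubic polynomial `R(w,z)` of the symmetric SQF model. -/
def Rcub (lam mu w z : ℝ) : ℝ :=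
  w ^ 3 - (lam - z) * w ^ 2 - (z + mu) ^ 2 * w - z * (z + mu) * (z + mu - lam)

/-- `s(z) = z - α(z)`, given the branch `α` of the cubic. -/
def sfun (alpha : ℝ → ℝ) (z : ℝ) : ℝ := z - alpha z

/-- `h(z) = (s(z) + ξ⁺(s(z)))/2`, given the branch `α` of the cubic. -/
def hfun (lam mu : ℝ) (alpha : ℝ → ℝ) (z : ℝ) : ℝ :=
  (sfun alpha z + xiPlus lam mu (sfun alpha z)) / 2

theorem stmt_19 (lam mu : ℝ) (hlam : 0 < lam) (hmu : lam < mu)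
    (hload : mu / 2 < lam) :
    HasDerivAt (fun s : ℝ => xiPlus lam mu s) (mu / (2 * lam - mu)) (lam - mu) := by
  have hpos : 0 < lam - mu / 2 := by linarith
  have hq : 0 < lam * (lam - mu / 2) := mul_pos hlam hpos
  -- value of Dq at the point
  have hDval : Dq lam mu (lam - mu) = (lam * (lam - mu / 2)) ^ 2 := by
    unfold Dq; ring
  have hDpos : 0 < Dq lam mu (lam - mu) := by
    rw [hDval]; positivity
  have hsqrtval : Real.sqrt (Dq lam mu (lam - mu)) = lam * (lam - mu / 2) := by
    rw [hDval, Real.sqrt_sq hq.le]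
  -- derivative of A
  have hA : HasDerivAt (fun s : ℝ => mu ^ 2 - lam * mu / 2 + (mu - lam) * s)
      (mu - lam) (lam - mu) := by
    simpa using ((hasDerivAt_id (lam - mu)).const_mul (mu - lam)).const_add
      (mu ^ 2 - lam * mu / 2)
  -- derivative of Dq
  have hB : HasDerivAt (fun s : ℝ => 2 * lam * mu * s * (mu + s))
      (2 * lam * mu * (mu + 2 * (lam - mu))) (lam - mu) := by
    have h1 : HasDerivAt (fun s : ℝ => 2 * lam * mu * s) (2 * lam * mu) (lam - mu) := by
      simpa using (hasDerivAt_id (lam - mu)).const_mul (2 * lam * mu)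
    have h2 : HasDerivAt (fun s : ℝ => mu + s) 1 (lam - mu) := by
      simpa using (hasDerivAt_id (lam - mu)).const_add mu
    have := h1.mul h2
    exact this.congr_deriv (by ring)
  have hD : HasDerivAt (fun s => Dq lam mu s)
      (2 * (mu ^ 2 - lam * mu / 2 + (mu - lam) * (lam - mu)) * (mu - lam)
        + 2 * lam * mu * (mu + 2 * (lam - mu))) (lam - mu) := by
    have := (hA.pow 2).add hB
    exact HasDerivAt.congr_deriv (f := fun s => Dq lam mu s) this (by norm_num)
  set D' : ℝ := 2 * (mu ^ 2 - lam * mu / 2 + (mu - lam) * (lam - mu)) * (mu - lam)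
        + 2 * lam * mu * (mu + 2 * (lam - mu)) with hD'def
  -- sqrt of Dq
  have hsqrt : HasDerivAt (fun s => Real.sqrt (Dq lam mu s))
      (D' / (2 * Real.sqrt (Dq lam mu (lam - mu)))) (lam - mu) :=
    hD.sqrt hDpos.ne'
  -- numerator
  have hN : HasDerivAt
      (fun s : ℝ => -(mu ^ 2 - lam * mu / 2 + (mu - lam) * s) + Real.sqrt (Dq lam mu s))
      (-(mu - lam) + D' / (2 * Real.sqrt (Dq lam mu (lam - mu)))) (lam - mu) :=
    hA.neg.add hsqrt
  -- denominator
  have hG : HasDerivAt (fun s : ℝ => 2 * (s + mu)) 2 (lam - mu) := by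
    simpa using ((hasDerivAt_id (lam - mu)).add_const mu).const_mul 2
  have hGne : 2 * ((lam - mu) + mu) ≠ 0 := by
    have : (lam - mu) + mu = lam := by ring
    rw [this]; positivity
  have hdiv := hN.div hG hGne
  have hfun : (fun s : ℝ => xiPlus lam mu s) =
      fun s : ℝ => (-(mu ^ 2 - lam * mu / 2 + (mu - lam) * s) + Real.sqrt (Dq lam mu s))
        / (2 * (s + mu)) := by
    funext s; rfl
  rw [hfun]
  refine HasDerivAt.congr_deriv hdiv ?_
  symm
  rw [hsqrtval, hD'def]
  have h1 : lam - mu / 2 ≠ 0 := hpos.ne'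
  have h2 : 2 * lam - mu ≠ 0 := by linarith
  have h3 : lam ≠ 0 := hlam.ne'
  rw [show (2 : ℝ) * (lam * (lam - mu / 2)) = lam * (2 * lam - mu) by ring]
  rw [div_eq_div_iff h2 (by positivity), add_div' _ _ _ (mul_ne_zero h3 h2),
    div_mul_eq_mul_div, div_sub' (mul_ne_zero h3 h2),
    div_mul_eq_mul_div, eq_div_iff (mul_ne_zero h3 h2)]
  ring
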